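/- If α ≤ β are finite-meet preserving maps H → N between frames (pointwise order), then Gl(α) ⊆ Gl(β), and the inclusion i : Gl(α) → Gl(β) preserves arbitrary joins and finite meets (a frame homomorphism). -/

import Mathlib

section
variable {N H : Type*} [Order.Frame N] [Order.Frame H]

/-- The Artin glueing `Gl(γ) = {(n,h) : n ≤ γ h}`. -/
def Gl (γ : H → N) : Type _ := {p : N × H // p.1 ≤ γ p.2}

instance (γ : H → N) : PartialOrder (Gl γ) :=
  inferInstanceAs (PartialOrder {p : N × H // p.1 ≤ γ p.2})

/-- A finite-meet preserving map is monotone. -/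
def monoOfInf {γ : H → N} (hγ_inf : ∀ a b, γ (a ⊓ b) = γ a ⊓ γ b) :
    Monotone γ := by
  intro a b hab
  have h := hγ_inf a b
  rw [inf_eq_left.mpr hab] at h
  exact h.trans_le inf_le_right

/-- Componentwise binary meet on `Gl(γ)`. -/
def Gl.inf {γ : H → N} (hγ_inf : ∀ a b, γ (a ⊓ b) = γ a ⊓ γ b)
    (p q : Gl γ) : Gl γ :=
  ⟨p.1 ⊓ q.1, le_trans (inf_le_inf p.2 q.2) (le_of_eq (hγ_inf _ _).symm)⟩

/-- The top element of `Gl(γ)`. -/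
def Gl.top {γ : H → N} (hγ_top : γ ⊤ = ⊤) : Gl γ := ⟨⊤, hγ_top.ge⟩

/-- Componentwise arbitrary join on `Gl(γ)`. -/
def Gl.sSup {γ : H → N} (hγ_mono : Monotone γ) (T : Set (Gl γ)) : Gl γ :=
  ⟨SupSet.sSup (Subtype.val '' T), by
    rw [Prod.fst_sSup]
    apply sSup_le
    rintro n ⟨q, hq, rfl⟩
    obtain ⟨x, hx, rfl⟩ := hq
    refine x.2.trans (hγ_mono ?_)
    rw [Prod.snd_sSup]
    exact le_sSup ⟨x.val, Set.mem_image_of_mem _ hx, rfl⟩⟩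

/-- For `α ≤ β` pointwise, the inclusion `Gl(α) → Gl(β)`. -/
def Gl.incl {α β : H → N} (hle : ∀ h, α h ≤ β h) (p : Gl α) : Gl β :=
  ⟨p.1, p.2.trans (hle _)⟩

end

/-- If `α ≤ β` pointwise, then `Gl(α) ⊆ Gl(β)` and the inclusion
`i : Gl(α) → Gl(β)` preserves arbitrary joins and finite meets, i.e. it is a
frame homomorphism. -/
theorem glueing_inclusion_frame_hom
    {N H : Type*} [Order.Frame N] [Order.Frame H]
    (α β : H → N)
    (hα_inf : ∀ a b, α (a ⊓ b) = α a ⊓ α b) (hα_top : α ⊤ = ⊤)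
    (hβ_inf : ∀ a b, β (a ⊓ b) = β a ⊓ β b) (hβ_top : β ⊤ = ⊤)
    (hle : ∀ h, α h ≤ β h) :
    ({p : N × H | p.1 ≤ α p.2} ⊆ {p : N × H | p.1 ≤ β p.2}) ∧
      (∀ p q : Gl α,
        Gl.incl hle (Gl.inf hα_inf p q) =
          Gl.inf hβ_inf (Gl.incl hle p) (Gl.incl hle q)) ∧
      (Gl.incl hle (Gl.top hα_top) = Gl.top hβ_top) ∧
      (∀ T : Set (Gl α),
        Gl.incl hle (Gl.sSup (monoOfInf hα_inf) T) =
          Gl.sSup (monoOfInf hβ_inf) (Gl.incl hle '' T)) := by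
  refine ⟨fun p hp => le_trans hp (hle _), fun p q => rfl, rfl, fun T => ?_⟩
  have hset : (Subtype.val '' (Gl.incl hle '' T) : Set (N × H)) = Subtype.val '' T := by
    ext x
    constructor
    · rintro ⟨y, ⟨z, hz, rfl⟩, rfl⟩
      exact ⟨z, hz, rfl⟩
    · rintro ⟨y, hy, rfl⟩
      exact ⟨Gl.incl hle y, ⟨y, hy, rfl⟩, rfl⟩
  apply Subtype.ext
  show (Gl.sSup (monoOfInf hα_inf) T).val = (Gl.sSup (monoOfInf hβ_inf) (Gl.incl hle '' T)).val
  unfold Gl.sSup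
  simp only [hset]
  exact congrArg SupSet.sSup hset.symm
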